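/- Let a > 0 be a real number, let k ≥ 1 be an integer and let c > 4^{k−1} be a real number. Let P' be a finite point of E'_a(ℝ) with x(P') ≥ c·√a, and suppose 2^kP' is a finite point. Then log z(2^kP') > −128·4^{2(k−1)}/c². -/

import Mathlib

open Filter Real

/-- The translated elliptic curve `E'_a : y² = x³ − 3√a·x² + 4a·x − 2a^{3/2}` over `ℝ`,
obtained from `E_a : y² = x³ + a·x` via `x ↦ x + √a`. -/
noncomputable def E'curve (a : ℝ) : WeierstrassCurve.Affine ℝ :=
  { a₁ := 0, a₂ := -3 * Real.sqrt a, a₃ := 0, a₄ := 4 * a, a₆ := -2 * a ^ ((3 : ℝ) / 2) }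

/-- The x-coordinate of a point (with junk value `0` at the identity `O`). -/
def xc {F : Type*} [Field F] {W : WeierstrassCurve.Affine F} : W.Point → F
  | .zero => 0
  | @WeierstrassCurve.Affine.Point.some _ _ _ x _ _ => x

/-- For a finite point `Q` of `E'_a` with `x(Q) = x`, the quantity
`z(Q) = 1 − 8a·x⁻² + 16·a^{3/2}·x⁻³ − 8a²·x⁻⁴` from Tate's series. -/
noncomputable def zE' (a x : ℝ) : ℝ :=
  1 - 8 * a / x ^ 2 + 16 * a ^ ((3 : ℝ) / 2) / x ^ 3 - 8 * a ^ 2 / x ^ 4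

namespace LogzAux

open WeierstrassCurve.Affine

lemma rpow32 {a : ℝ} (ha : 0 < a) : a ^ ((3:ℝ)/2) = Real.sqrt a ^ 3 := by
  have h : a ^ ((3:ℝ)/2) = (a ^ ((1:ℝ)/2)) ^ (3:ℕ) := by
    rw [← Real.rpow_natCast (a ^ ((1:ℝ)/2)) 3, ← Real.rpow_mul ha.le]
    norm_num
  rw [h, ← Real.sqrt_eq_rpow]

lemma ysq {a x y : ℝ} (ha : 0 < a) (h : (E'curve a).Equation x y) :
    y ^ 2 = (x - Real.sqrt a) * ((x - Real.sqrt a) ^ 2 + a) := by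
  rw [WeierstrassCurve.Affine.equation_iff] at h
  have h32 := rpow32 ha
  have hsa : Real.sqrt a ^ 2 = a := Real.sq_sqrt ha.le
  simp only [E'curve] at h
  rw [h32] at h
  linear_combination h - (3*x + Real.sqrt a) * hsa

lemma x_ge {a x y : ℝ} (ha : 0 < a) (h : (E'curve a).Equation x y) : Real.sqrt a ≤ x := by
  have h2 := ysq ha h
  by_contra hlt
  push_neg at hlt
  nlinarith [sq_nonneg y, sq_nonneg (x - Real.sqrt a)]

lemma xc_double {a : ℝ} (ha : 0 < a) {x y : ℝ} (h : (E'curve a).Nonsingular x y)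
    (hy : y ≠ 0) :
    x / 4 ≤ xc ((2:ℕ) • (WeierstrassCurve.Affine.Point.some _ _ h)) := by
  set s := Real.sqrt a with hs_def
  have hsa : s ^ 2 = a := Real.sq_sqrt ha.le
  have hs : 0 < s := Real.sqrt_pos.2 ha
  have heq : (E'curve a).Equation x y := h.1
  have hy2 := ysq ha heq
  have hxle : s ≤ x := x_ge ha heq
  have hxs : s < x := by
    rcases lt_or_eq_of_le hxle with h' | h'
    · exact h'
    · exfalso; apply hy; nlinarith [hy2]
  have hneg : y ≠ (E'curve a).negY x y := by
    simp only [WeierstrassCurve.Affine.negY, E'curve]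
    intro hcon
    apply hy
    linarith [hcon]
  have hadd := WeierstrassCurve.Affine.Point.add_self_of_Y_ne (h₁ := h) hneg
  have h2P : (2:ℕ) • (Point.some _ _ h) = Point.some _ _ h + Point.some _ _ h := two_smul ℕ _
  rw [h2P, hadd]
  have hslope : (E'curve a).slope x x y y = (3*x^2 - 6*s*x + 4*a)/(2*y) := by
    rw [WeierstrassCurve.Affine.slope_of_Y_ne rfl hneg]
    simp only [WeierstrassCurve.Affine.negY, E'curve]
    ring_nf
    rw [hs_def]
    ring
  show x / 4 ≤ (E'curve a).addX x x ((E'curve a).slope x x y y)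
  rw [hslope]
  simp only [WeierstrassCurve.Affine.addX, E'curve]
  have hy2pos : 0 < y ^ 2 := by positivity
  have hdiv : ((3*x^2 - 6*s*x + 4*a)/(2*y))^2 = (3*x^2 - 6*s*x + 4*a)^2 / (4*y^2) := by
    rw [div_pow]; ring_nf
  rw [hdiv, ← hs_def]
  have key : (9*x/4 - 3*s) * (4*y^2) ≤ (3*x^2 - 6*s*x + 4*a)^2 := by
    rw [← hs_def] at hy2
    nlinarith [mul_nonneg (mul_nonneg hs.le (sub_nonneg.2 hxle)) (sq_nonneg ((x-s) - s/2)),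
      mul_nonneg (mul_nonneg (mul_nonneg hs.le hs.le) hs.le) (sub_nonneg.2 hxle),
      pow_pos hs 4, hy2, hsa]
  have hles : 9*x/4 - 3*s ≤ (3*x^2 - 6*s*x + 4*a)^2 / (4*y^2) :=
    (le_div_iff₀ (by positivity)).2 key
  linarith [hles]

lemma log_aux {t : ℝ} (ht : 0 < t) (ht1 : t ≤ 1) :
    Real.log (1 - 8*t^2*(1-t)^2) > -(8*t^2) := by
  rcases eq_or_lt_of_le ht1 with h1 | h1
  · rw [h1]; norm_num
  set z : ℝ := 1 - 8*t^2*(1-t)^2 with hz_def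
  have hz2 : (1:ℝ)/2 ≤ z := by
    nlinarith [sq_nonneg (2*t-1), mul_nonneg ht.le (sub_nonneg.2 ht1),
      sq_nonneg (t*(1-t))]
  have hz0 : 0 < z := by linarith
  have hz1 : z < 1 := by
    nlinarith [mul_pos (mul_pos ht ht) (mul_pos (sub_pos.2 h1) (sub_pos.2 h1))]
  have hlog : 1 - 1/z < Real.log z := by
    have h' := Real.log_lt_sub_one_of_pos (x := z⁻¹) (by positivity)
      (by rw [ne_eq, inv_eq_one]; exact ne_of_lt hz1)
    rw [Real.log_inv] at h'
    rw [one_div]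
    linarith
  have hq : -(8*t^2) ≤ 1 - 1/z := by
    have h1z : 1/z ≤ 1 + 8*t^2 := by
      rw [div_le_iff₀ hz0]
      nlinarith [mul_nonneg (mul_nonneg (mul_nonneg ht.le ht.le) ht.le)
        (mul_nonneg (sub_nonneg.2 h1.le) (sq_nonneg (2*t-1))), pow_pos ht 4]
    linarith
  linarith

lemma zE'_eq {a X : ℝ} (ha : 0 < a) (hX : X ≠ 0) :
    zE' a X = 1 - 8*(Real.sqrt a/X)^2*(1 - Real.sqrt a/X)^2 := by
  have hsa : Real.sqrt a ^ 2 = a := Real.sq_sqrt ha.le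
  unfold zE'
  rw [rpow32 ha]
  field_simp
  ring_nf
  linear_combination (8*X^2 + 8*(Real.sqrt a^2 + a)) * hsa

end LogzAux

open LogzAux WeierstrassCurve.Affine

/-- Lemma 3.3(b): for `a > 0`, an integer `k ≥ 1` and a real `c > 4^{k−1}`, if `P'` is a
finite point of `E'_a(ℝ)` with `x(P') ≥ c·√a` and `2^kP'` is a finite point, then
`log z(2^kP') > −128·4^{2(k−1)}/c²`. -/
theorem logz_2kP_lower_bound_c (a : ℝ) (ha : 0 < a) (k : ℕ) (hk : 1 ≤ k)
    (c : ℝ) (hc : (4 : ℝ) ^ (k - 1) < c)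
    (P' : (E'curve a).Point) (hP' : P' ≠ 0)
    (hx : c * Real.sqrt a ≤ xc P')
    (h2k : (2 ^ k) • P' ≠ 0) :
    Real.log (zE' a (xc ((2 ^ k) • P'))) > -(128 * (4 : ℝ) ^ (2 * (k - 1)) / c ^ 2) := by
  set s := Real.sqrt a with hs_def
  have hs : 0 < s := Real.sqrt_pos.2 ha
  have hc0 : (0:ℝ) < c := lt_trans (by positivity) hc
  have hnz : ∀ j, j ≤ k → (2^j : ℕ) • P' ≠ 0 := by
    intro j hj h0
    apply h2k
    have he : (2:ℕ)^k = 2^(k-j) * 2^j := by rw [← pow_add]; congr 1; omega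
    rw [he, mul_smul, h0]
    exact nsmul_zero _
  have key : ∀ j, j ≤ k → c * s / 4^j ≤ xc ((2^j : ℕ) • P') := by
    intro j
    induction j with
    | zero => intro _; simpa using hx
    | succ n ih =>
      intro hn
      have hn' : n ≤ k := by omega
      have h1 := ih hn'
      have hPn := hnz n hn'
      obtain ⟨x, y, hxy, hPeq⟩ : ∃ x y, ∃ hxy : (E'curve a).Nonsingular x y,
          (2^n : ℕ) • P' = Point.some _ _ hxy := by
        cases hq : ((2^n : ℕ) • P') with
        | zero => exact absurd (by rw [hq]; rfl) hPn
        | some x' y' h' => exact ⟨_, _, h', rfl⟩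
      have hsucc : ((2:ℕ)^(n+1)) • P' = (2:ℕ) • ((2^n : ℕ) • P') := by
        rw [← mul_smul, ← pow_succ']
      have hy : y ≠ 0 := by
        intro hy0
        apply hnz (n+1) hn
        rw [hsucc, hPeq, two_smul ℕ, Point.add_self_of_Y_eq]
        rw [hy0]
        simp [E'curve, WeierstrassCurve.Affine.negY]
      have hstep : x / 4 ≤ xc ((2:ℕ) • ((2^n:ℕ) • P')) := by
        rw [hPeq]; exact xc_double ha hxy hy
      have hxval : xc ((2^n : ℕ) • P') = x := by rw [hPeq]; rfl
      rw [hxval] at h1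
      rw [hsucc]
      calc c * s / 4^(n+1) = (c * s / 4^n) / 4 := by rw [pow_succ]; ring
        _ ≤ x / 4 := by linarith
        _ ≤ _ := hstep
  have hQnz := hnz k le_rfl
  obtain ⟨x, y, hxy, hQeq⟩ : ∃ x y, ∃ hxy : (E'curve a).Nonsingular x y,
      (2^k : ℕ) • P' = Point.some _ _ hxy := by
    cases hq : ((2^k : ℕ) • P') with
    | zero => exact absurd (by rw [hq]; rfl) hQnz
    | some x' y' h' => exact ⟨_, _, h', rfl⟩
  have hkey := key k le_rfl
  rw [hQeq] at hkey ⊢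
  have hxval : xc (Point.some _ _ hxy) = x := rfl
  rw [hxval] at hkey ⊢
  have hsX : s ≤ x := x_ge ha hxy.1
  have hX0 : 0 < x := lt_of_lt_of_le hs hsX
  rw [zE'_eq ha hX0.ne']
  have ht : 0 < s/x := by positivity
  have ht1 : s/x ≤ 1 := (div_le_one hX0).2 hsX
  have hmain := log_aux ht ht1
  have htB : s/x ≤ 4^k / c := by
    rw [div_le_div_iff₀ hX0 hc0]
    have h4 : (0:ℝ) < 4^k := by positivity
    have h2 : c * s ≤ 4^k * x := by
      calc c*s = (c*s/4^k)*4^k := by field_simp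
        _ ≤ x * 4^k := mul_le_mul_of_nonneg_right hkey h4.le
        _ = 4^k * x := mul_comm _ _
    linarith
  have hfin : -(8*((4:ℝ)^k/c)^2) ≤ -(8*(s/x)^2) := by
    have := pow_le_pow_left₀ ht.le htB 2
    linarith
  have harith : -(128 * (4:ℝ)^(2*(k-1)) / c^2) = -(8*((4:ℝ)^k/c)^2) := by
    obtain ⟨m, rfl⟩ : ∃ m, k = m + 1 := ⟨k-1, by omega⟩
    have e1 : ((4:ℝ)^(m+1))^2 = 4^(2*m) * 16 := by
      rw [← pow_mul, show (m+1)*2 = 2*m+2 by ring, pow_add]; norm_num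
    rw [div_pow, e1]
    simp only [Nat.add_sub_cancel]
    ring
  rw [harith]
  exact lt_of_le_of_lt hfin hmain
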